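/- Define μ(t) = (√(1+8e^t)−1)/2 − 1 and, for x > 0, let I(x) = sup_{t∈ℝ} (xt − μ(t)) be its Legendre–Fenchel transform. Then I(x) = x·log(x/2) + x·arsinh(2x) − x − (1/2)√(1+4x²) + 3/2 for all x > 0. -/

import Mathlib

set_option maxHeartbeats 1000000


open Real

/-- `μ(t) = (√(1+8eᵗ)-1)/2 - 1`. -/
noncomputable def mu (t : ℝ) : ℝ := (Real.sqrt (1 + 8 * Real.exp t) - 1) / 2 - 1

/-- For `x > 0`, the Legendre–Fenchel transform `I(x) = sup_t (xt - μ(t))` equals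
`x log(x/2) + x arsinh(2x) - x - √(1+4x²)/2 + 3/2`. -/
theorem legendre_transform_mu (x : ℝ) (hx : 0 < x) :
    IsLUB (Set.range fun t : ℝ => x * t - mu t)
      (x * Real.log (x / 2) + x * Real.arsinh (2 * x) - x
        - Real.sqrt (1 + 4 * x ^ 2) / 2 + 3 / 2) := by
  set s : ℝ := Real.sqrt (1 + 4 * x ^ 2) with hs_def
  have hs2 : s ^ 2 = 1 + 4 * x ^ 2 := Real.sq_sqrt (by positivity)
  have hs0 : 0 ≤ s := Real.sqrt_nonneg _
  have harsinh : Real.arsinh (2 * x) = Real.log (2 * x + s) := by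
    rw [Real.arsinh, hs_def]
    norm_num
    ring_nf
  clear_value s
  have hs1 : 1 ≤ s := by nlinarith
  obtain ⟨y, hy_def⟩ : ∃ y : ℝ, y = x ^ 2 + x * s / 2 := ⟨_, rfl⟩
  have hy : 0 < y := by rw [hy_def]; positivity
  obtain ⟨w, hw_def⟩ : ∃ w : ℝ, w = 2 * y / x := ⟨_, rfl⟩
  have hwx : w * x = 2 * y := by rw [hw_def]; field_simp
  have hw0 : 0 < w := by rw [hw_def]; positivity
  have hw2 : w ^ 2 = 1 + 8 * y := by
    have h4 : 4 * y ^ 2 = x ^ 2 * (1 + 8 * y) := by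
      rw [hy_def]; linear_combination x ^ 2 * hs2
    have hx0 : x ≠ 0 := hx.ne'
    rw [hw_def]
    field_simp
    linear_combination h4
  have hw1 : 1 < w := by nlinarith
  have hsqrtw : Real.sqrt (1 + 8 * y) = w := by
    rw [← hw2, Real.sqrt_sq hw0.le]
  have hlogy : Real.log y = Real.log (x / 2) + Real.log (2 * x + s) := by
    have hy_eq : y = (x / 2) * (2 * x + s) := by rw [hy_def]; ring
    rw [hy_eq, Real.log_mul (by positivity) (by positivity)]
  have hC : x * Real.log (x / 2) + x * Real.arsinh (2 * x) - x - s / 2 + 3 / 2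
      = x * Real.log y - w / 2 + 3 / 2 := by
    rw [harsinh, hlogy]
    have hhalf : w / 2 = x + s / 2 := by
      rw [hw_def, hy_def]; field_simp
    rw [hhalf]; ring
  rw [hC]
  constructor
  · -- upper bound
    rintro z ⟨t, rfl⟩
    simp only [mu]
    obtain ⟨u, hu_def⟩ : ∃ u : ℝ, u = Real.exp t := ⟨_, rfl⟩
    have hu : 0 < u := hu_def ▸ Real.exp_pos t
    obtain ⟨v, hv_def⟩ : ∃ v : ℝ, v = Real.sqrt (1 + 8 * u) := ⟨_, rfl⟩
    have hv0 : 0 ≤ v := hv_def ▸ Real.sqrt_nonneg _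
    have hv2 : v ^ 2 = 1 + 8 * u := by rw [hv_def]; exact Real.sq_sqrt (by positivity)
    have hv1 : 1 < v := by nlinarith
    have ht : t = Real.log u := by rw [hu_def, Real.log_exp]
    have hr1 : Real.log ((v - 1) / (w - 1)) ≤ (v - 1) / (w - 1) - 1 :=
      Real.log_le_sub_one_of_pos (div_pos (by linarith) (by linarith))
    have hr2 : Real.log ((v + 1) / (w + 1)) ≤ (v + 1) / (w + 1) - 1 :=
      Real.log_le_sub_one_of_pos (div_pos (by linarith) (by linarith))
    have hsplit : Real.log u - Real.log y
        = Real.log ((v - 1) / (w - 1)) + Real.log ((v + 1) / (w + 1)) := by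
      rw [← Real.log_mul (div_pos (by linarith) (by linarith)).ne'
        (div_pos (by linarith) (by linarith)).ne', ← Real.log_div hu.ne' hy.ne']
      congr 1
      have h1 : w - 1 ≠ 0 := by linarith
      have h2 : w + 1 ≠ 0 := by linarith
      field_simp
      linear_combination u * hw2 - y * hv2
    have hcomb : x * ((v - 1) / (w - 1) - 1 + ((v + 1) / (w + 1) - 1)) = (v - w) / 2 := by
      have h1 : w - 1 ≠ 0 := by linarith
      have h2 : w + 1 ≠ 0 := by linarith
      field_simp
      linear_combination 4 * (v - w) * hwx - (v - w) * hw2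
    have hkey : x * (Real.log u - Real.log y) ≤ (v - w) / 2 := by
      rw [hsplit, ← hcomb]
      have h := add_le_add hr1 hr2
      nlinarith [h]
    rw [mul_sub] at hkey
    rw [ht, Real.exp_log hu, ← hv_def]
    linarith
  · intro b hb
    refine hb ⟨Real.log y, ?_⟩
    simp only [mu, Real.exp_log hy, hsqrtw]
    ring
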